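/- Let G be a subgraph of a complete r-partite graph K_{n₁,n₂,…,n_r} that contains no multipartite cycle. If P = xyz is a multipartite path on three vertices in G (i.e., x, y, z pairwise lie in at least three distinct parts), then y is a cut vertex of G. -/

import Mathlib

open Finset

/-- The complete `r`-partite graph with parts of sizes `n 0, n 1, …, n (r-1)`. -/
def Kpartite (r : ℕ) (n : ℕ → ℕ) : SimpleGraph ((i : Fin r) × Fin (n i)) :=
  SimpleGraph.completeMultipartiteGraph fun i : Fin r => Fin (n i)

/-- The edge-coloring `c` contains a rainbow 3-cycle in `G`. -/
def RainbowC3 {V α : Type*} (G : SimpleGraph V) (c : Sym2 V → α) : Prop :=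
  ∃ a b d : V, G.Adj a b ∧ G.Adj b d ∧ G.Adj d a ∧
    c s(a, b) ≠ c s(b, d) ∧ c s(b, d) ≠ c s(d, a) ∧ c s(a, b) ≠ c s(d, a)

/-- The edge-coloring `c` contains a rainbow 4-cycle in `G`. -/
def RainbowC4 {V α : Type*} (G : SimpleGraph V) (c : Sym2 V → α) : Prop :=
  ∃ a b d e : V, G.Adj a b ∧ G.Adj b d ∧ G.Adj d e ∧ G.Adj e a ∧
    a ≠ d ∧ b ≠ e ∧
    c s(a, b) ≠ c s(b, d) ∧ c s(a, b) ≠ c s(d, e) ∧ c s(a, b) ≠ c s(e, a) ∧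
    c s(b, d) ≠ c s(d, e) ∧ c s(b, d) ≠ c s(e, a) ∧ c s(d, e) ≠ c s(e, a)

/-- The coloring `c` uses every one of the `k` colors on at least one edge of `G`
(i.e. it uses exactly `k` colors). -/
def SurjOnEdges {V : Type*} {k : ℕ} (G : SimpleGraph V) (c : Sym2 V → Fin k) : Prop :=
  ∀ i : Fin k, ∃ e ∈ G.edgeSet, c e = i

/-- `G` (a subgraph of an `r`-partite graph) contains a cycle whose vertex set meets
at least three distinct parts. -/
def HasMultipartiteCycle {r : ℕ} {n : ℕ → ℕ}
    (G : SimpleGraph ((i : Fin r) × Fin (n i))) : Prop :=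
  ∃ (v : (i : Fin r) × Fin (n i)) (w : G.Walk v v), w.IsCycle ∧
    3 ≤ (w.support.map Sigma.fst).toFinset.card

/-- `G` contains a path on three vertices meeting three distinct parts. -/
def HasMultipartiteP3 {r : ℕ} {n : ℕ → ℕ}
    (G : SimpleGraph ((i : Fin r) × Fin (n i))) : Prop :=
  ∃ x y z : (i : Fin r) × Fin (n i), G.Adj x y ∧ G.Adj y z ∧
    x.1 ≠ y.1 ∧ y.1 ≠ z.1 ∧ x.1 ≠ z.1

/-- `y` is a cut vertex of `G`: removing `y` disconnects two vertices that were
connected in `G`. -/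
def IsCutVertex {V : Type*} (G : SimpleGraph V) (y : V) : Prop :=
  ∃ (u w : V) (hu : u ≠ y) (hw : w ≠ y), G.Reachable u w ∧
    ¬ (G.induce {v : V | v ≠ y}).Reachable ⟨u, hu⟩ ⟨w, hw⟩

open SimpleGraph in
/-- In a subgraph of a complete `r`-partite graph with no multipartite cycle, the middle
vertex of any multipartite `P₃` is a cut vertex. -/
theorem middle_of_multipartite_P3_is_cutVertex (r : ℕ) (n : ℕ → ℕ)
    (G : SimpleGraph ((i : Fin r) × Fin (n i))) (hG : G ≤ Kpartite r n)
    (hnc : ¬ HasMultipartiteCycle G)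
    (x y z : (i : Fin r) × Fin (n i)) (hxy : G.Adj x y) (hyz : G.Adj y z)
    (h1 : x.1 ≠ y.1) (h2 : y.1 ≠ z.1) (h3 : x.1 ≠ z.1) :
    IsCutVertex G y := by
  have hxney : x ≠ y := fun h => h1 (by rw [h])
  have hzney : z ≠ y := fun h => h2 (by rw [h])
  have hxnez : x ≠ z := fun h => h3 (by rw [h])
  refine ⟨x, z, hxney, hzney, ⟨(Walk.cons hxy (Walk.cons hyz Walk.nil))⟩, ?_⟩
  rintro ⟨q⟩
  -- map the walk into G
  let p0 : G.Walk x z := (q.map (SimpleGraph.Embedding.induce _).toHom)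
  have hysup : y ∉ p0.support := by
    intro hy
    rw [show p0.support = q.support.map _ from Walk.support_map _ _, List.mem_map] at hy
    obtain ⟨⟨v, hv⟩, _, h⟩ := hy
    exact hv h
  -- take a path
  let p : G.Path x z := p0.toPath
  have hysup' : y ∉ p.val.support := fun h => hysup (Walk.support_toPath_subset _ h)
  have hzsup : z ∈ p.val.support := Walk.end_mem_support _
  -- the walk x → z → y
  let q1 : G.Walk x y := p.val.append (Walk.cons hyz.symm Walk.nil)
  have hq1path : q1.IsPath := by
    rw [Walk.isPath_def, Walk.support_append]
    simp only [Walk.support_cons, Walk.support_nil, List.tail_cons]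
    rw [List.nodup_append]
    refine ⟨p.property.support_nodup, List.nodup_singleton _, ?_⟩
    intro a ha b hb
    simp only [List.mem_singleton] at hb
    subst hb
    rintro rfl
    exact hysup' ha
  have hedge : s(y, x) ∉ q1.edges := by
    intro he
    rw [Walk.edges_append] at he
    rcases List.mem_append.mp he with h | h
    · exact hysup' (Walk.fst_mem_support_of_mem_edges _ h)
    · simp only [Walk.edges_cons, Walk.edges_nil, List.mem_singleton] at h
      rw [Sym2.eq_iff] at h
      rcases h with ⟨rfl, _⟩ | ⟨_, h⟩
      · exact hzney rfl
      · exact hxnez h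
  have hcyc : (Walk.cons hxy.symm q1).IsCycle :=
    SimpleGraph.Path.cons_isCycle ⟨q1, hq1path⟩ hxy.symm hedge
  apply hnc
  refine ⟨y, Walk.cons hxy.symm q1, hcyc, ?_⟩
  have hsub : ({x.1, y.1, z.1} : Finset (Fin r)) ⊆
      ((Walk.cons hxy.symm q1).support.map Sigma.fst).toFinset := by
    intro i hi
    simp only [mem_insert, mem_singleton] at hi
    rw [List.mem_toFinset, List.mem_map]
    rcases hi with rfl | rfl | rfl
    · exact ⟨x, by simp [q1, Walk.support_append], rfl⟩
    · exact ⟨y, by simp, rfl⟩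
    · exact ⟨z, by
        simp only [Walk.support_cons, List.mem_cons]
        right
        rw [Walk.support_append]
        exact List.mem_append.mpr (Or.inl hzsup), rfl⟩
  calc 3 = ({x.1, y.1, z.1} : Finset (Fin r)).card := by
            rw [card_insert_of_notMem (by simp [h1, h3]),
              card_insert_of_notMem (by simp [h2]), card_singleton]
       _ ≤ _ := card_le_card hsub
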